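/- If the k-partite graph G contains a multicoloured clique on k vertices, then the constructed threshold instance (H,t) has a harmless set of size C(k,2)·(n−1) + k·n + m, where C(k,2) = k(k−1)/2. -/

import Mathlib

/-- A set `S` is harmless for the threshold instance `(G, t)` if every vertex `v`
has strictly fewer than `t v` neighbours in `S`. -/
def HarmlessSet {W : Type*} (G : SimpleGraph W) (t : W → ℕ) (S : Set W) : Prop :=
  ∀ v : W, (G.neighborSet v ∩ S).ncard < t v

/-- Raw vertices of the constructed graph `H` for the reduction from
Multicoloured Clique: the vertices `a_F`, `b_F`, the dark/light/XOR vertices of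
the selection gadgets, the four port vertices of each port gadget
(`plus : Bool` distinguishes `p⁺` from `p⁻`, `side : Bool` distinguishes the
side `i` from the side `j`), the light/dark/XOR vertices of the test gadgets,
and the apices `a_{ij}`. -/
inductive HVert (k n : ℕ) : Type where
  | aF : HVert k n
  | bF : HVert k n
  | selD : Fin k → Fin n → HVert k n
  | selL : Fin k → Fin n → HVert k n
  | selX : Fin k → Fin n → HVert k n
  | port : Fin k → Fin k → Bool → Bool → HVert k n
  | testL : Fin k → Fin k → Fin n → Fin n → Fin n → HVert k n
  | testD : Fin k → Fin k → Fin n → Fin n → HVert k n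
  | testX : Fin k → Fin k → Fin n → Fin n → Fin n → HVert k n
  | apex : Fin k → Fin k → HVert k n

/-- Which raw vertices actually exist: port gadgets and apices exist for every
pair `i < j`, and the test gadget `T_{xy}` for the pair `i < j` exists precisely
when `v^i_x v^j_y` is an edge of `G` (encoded by the relation `E`). -/
def HValid {k n : ℕ} (E : Fin k → Fin n → Fin k → Fin n → Prop) : HVert k n → Prop
  | .port i j _ _ => i < j
  | .apex i j => i < j
  | .testL i j x y _ => i < j ∧ E i x j y
  | .testD i j x y => i < j ∧ E i x j y
  | .testX i j x y _ => i < j ∧ E i x j y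
  | _ => True

/-- The base adjacency relation of the constructed graph `H` (symmetrised by
`SimpleGraph.fromRel`).  Indices `x y r : Fin n` are 0-based, representing the
paper's 1-based indices `x+1`, `y+1`, `r+1`; so `p⁺` is adjacent to the light
vertex `l_{r+1}` of `T_{(x+1)(y+1)}` iff `r + 1 ≤ n − (x + 1)`,
i.e. `r + x + 2 ≤ n`, and `p⁻` to the remaining light vertices. -/
def hRel {k n : ℕ} : HVert k n → HVert k n → Prop
  | .aF, .bF => True
  | .aF, .selX _ _ => True
  | .aF, .testX _ _ _ _ _ => True
  | .aF, .port _ _ _ _ => True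
  | .aF, .apex _ _ => True
  | .selX i s, .selD i' s' => i = i' ∧ s = s'
  | .selX i s, .selL i' s' => i = i' ∧ s = s'
  | .port i j plus side, .selL i' _ => (if side then j else i) = i' ∧ plus = true
  | .port i j plus side, .selD i' _ => (if side then j else i) = i' ∧ plus = false
  | .port i j plus side, .testL i' j' x y r =>
      i = i' ∧ j = j' ∧
      ((plus = true ∧ (r : ℕ) + (if side then (y : ℕ) else (x : ℕ)) + 2 ≤ n) ∨
       (plus = false ∧ n < (r : ℕ) + (if side then (y : ℕ) else (x : ℕ)) + 2))
  | .testX i j x y _, .testD i' j' x' y' => i = i' ∧ j = j' ∧ x = x' ∧ y = y'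
  | .testX i j x y r, .testL i' j' x' y' r' =>
      i = i' ∧ j = j' ∧ x = x' ∧ y = y' ∧ r = r'
  | .apex i j, .testL i' j' _ _ _ => i = i' ∧ j = j'
  | _, _ => False

/-- The constructed graph `H` of the reduction, on the valid vertices. -/
def HBig {k n : ℕ} (E : Fin k → Fin n → Fin k → Fin n → Prop) :
    SimpleGraph {v : HVert k n // HValid E v} :=
  SimpleGraph.fromRel (fun a b => hRel a.1 b.1)

/-- The threshold function of the constructed instance: `a_F, b_F` get
threshold `1`, the XOR vertices get `2`, ports and apices get `n + 1`, and all
light and dark vertices of selection and test gadgets get their degree plus one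
(so they impose no constraint). -/
noncomputable def hT {k n : ℕ} (E : Fin k → Fin n → Fin k → Fin n → Prop) :
    {v : HVert k n // HValid E v} → ℕ := fun v =>
  match v.1 with
  | .aF => 1
  | .bF => 1
  | .selX _ _ => 2
  | .testX _ _ _ _ _ => 2
  | .port _ _ _ _ => n + 1
  | .apex _ _ => n + 1
  | _ => ((HBig E).neighborSet v).ncard + 1

/-- The total number `m` of edges of the multicoloured-clique instance,
counting each edge once (with its smaller colour first). -/
noncomputable def mTotal {k n : ℕ} (E : Fin k → Fin n → Fin k → Fin n → Prop) : ℕ :=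
  {q : (Fin k × Fin n) × (Fin k × Fin n) |
    q.1.1 < q.2.1 ∧ E q.1.1 q.1.2 q.2.1 q.2.2}.ncard

/-! ### Auxiliary material -/

private def hEnc {k n : ℕ} : HVert k n →
    Fin 10 × Option (Fin k) × Option (Fin k) × Option (Fin n) × Option (Fin n) × Option (Fin n)
      × Bool × Bool
  | .aF => ((0 : Fin 10), none, none, none, none, none, false, false)
  | .bF => (1, none, none, none, none, none, false, false)
  | .selD i s => (2, some i, none, some s, none, none, false, false)
  | .selL i s => (3, some i, none, some s, none, none, false, false)
  | .selX i s => (4, some i, none, some s, none, none, false, false)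
  | .port i j p q => (5, some i, some j, none, none, none, p, q)
  | .testL i j x y r => (6, some i, some j, some x, some y, some r, false, false)
  | .testD i j x y => (7, some i, some j, some x, some y, none, false, false)
  | .testX i j x y r => (8, some i, some j, some x, some y, some r, false, false)
  | .apex i j => (9, some i, some j, none, none, none, false, false)

instance {k n : ℕ} : Finite (HVert k n) := by
  apply Finite.of_injective hEnc
  intro a b h
  cases a <;> cases b <;> simp_all [hEnc]

theorem cardLtPairs (k : ℕ) : ({p : Fin k × Fin k | p.1 < p.2}).ncard = Nat.choose k 2 := by
  rw [← Nat.card_coe_set_eq]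
  have e : {p : Fin k × Fin k // p.1 < p.2} ≃ Σ j : Fin k, Fin (j : ℕ) :=
    { toFun := fun p => ⟨p.1.2, ⟨(p.1.1 : ℕ), p.2⟩⟩
      invFun := fun s => ⟨(⟨(s.2 : ℕ), s.2.isLt.trans s.1.isLt⟩, s.1), s.2.isLt⟩
      left_inv := fun p => by ext <;> simp
      right_inv := fun s => by ext <;> simp }
  have h2 : Nat.card {p : Fin k × Fin k // p.1 < p.2} = Nat.card (Σ j : Fin k, Fin (j : ℕ)) :=
    Nat.card_congr e
  rw [show Nat.card ↑{p : Fin k × Fin k | p.1 < p.2}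
      = Nat.card {p : Fin k × Fin k // p.1 < p.2} from rfl]
  rw [h2, Nat.card_eq_fintype_card, Fintype.card_sigma]
  simp only [Fintype.card_fin]
  rw [show (∑ x : Fin k, (x : ℕ)) = ∑ i ∈ Finset.range k, i from
    Fin.sum_univ_eq_sum_range (fun i => i) k, Finset.sum_range_id, Nat.choose_two_right]

/-- The harmless set, as a predicate on raw vertices. -/
def inS {k n : ℕ} (c : Fin k → Fin n) : HVert k n → Prop
  | .selL i s => (s : ℕ) ≤ (c i : ℕ)
  | .selD i s => (c i : ℕ) < (s : ℕ)
  | .testL i j x y _ => x = c i ∧ y = c j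
  | .testD i j x y => ¬(x = c i ∧ y = c j)
  | _ => False

def fsel {k n : ℕ} (c : Fin k → Fin n) (p : Fin k × Fin n) : HVert k n :=
  if (p.2 : ℕ) ≤ (c p.1 : ℕ) then .selL p.1 p.2 else .selD p.1 p.2

def ftl {k n : ℕ} (c : Fin k → Fin n) (p : (Fin k × Fin k) × Fin n) : HVert k n :=
  .testL p.1.1 p.1.2 (c p.1.1) (c p.1.2) p.2

def ftd {k n : ℕ} (q : (Fin k × Fin n) × (Fin k × Fin n)) : HVert k n :=
  .testD q.1.1 q.2.1 q.1.2 q.2.2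

/-- Counting helper: a set injecting into `{0, …, n-1}` has at most `n` elements. -/
theorem ncard_le_of_injOn_lt {α : Type*} {s : Set α} {g : α → ℕ} {n : ℕ}
    (hinj : Set.InjOn g s) (hlt : ∀ a ∈ s, g a < n) : s.ncard ≤ n := by
  calc s.ncard = (g '' s).ncard := (Set.ncard_image_of_injOn hinj).symm
    _ ≤ (Set.Iio n).ncard := by
        refine Set.ncard_le_ncard ?_ (Set.finite_Iio n)
        rintro x ⟨a, ha, rfl⟩
        exact hlt a ha
    _ = n := by rw [← Finset.coe_Iio, Set.ncard_coe_finset, Nat.card_Iio]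

theorem ncard_le_one_of_subset_singleton {α : Type*} {s : Set α} {x : α} (h : s ⊆ {x}) :
    s.ncard ≤ 1 :=
  le_trans (Set.ncard_le_ncard h (Set.finite_singleton x)) (le_of_eq (Set.ncard_singleton x))

/-- Counting function used for the port vertices. -/
def gport {k n : ℕ} (a : ℕ) : Bool → HVert k n → ℕ
  | _, .selL _ s => (s : ℕ)
  | _, .selD _ s => (s : ℕ)
  | true, .testL _ _ _ _ r => (r : ℕ) + a + 1
  | false, .testL _ _ _ _ r => (r : ℕ) + a + 1 - n
  | _, _ => 0

/-- Counting function used for the apex vertices. -/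
def gapex {k n : ℕ} : HVert k n → ℕ
  | .testL _ _ _ _ r => (r : ℕ)
  | _ => 0

/-- Completeness: if `G` contains a multicoloured clique on `k` vertices, then
the constructed instance `(H, t)` has a harmless set of size
`C(k,2)·(n−1) + k·n + m`. -/
theorem multicolouredClique_to_harmless (k n : ℕ) (hk : 2 ≤ k)
    (E : Fin k → Fin n → Fin k → Fin n → Prop)
    (hsymm : ∀ i x j y, E i x j y → E j y i x)
    (hpart : ∀ i x j y, E i x j y → i ≠ j)
    (c : Fin k → Fin n) (hc : ∀ i j : Fin k, i ≠ j → E i (c i) j (c j)) :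
    ∃ S : Set {v : HVert k n // HValid E v},
      HarmlessSet (HBig E) (hT E) S ∧
      S.ncard = Nat.choose k 2 * (n - 1) + k * n + mTotal E := by
  classical
  have hn : 0 < n := (c ⟨0, by omega⟩).pos
  refine ⟨{v | inS c v.1}, ?_, ?_⟩
  · -- Harmlessness
    have hadj_iff : ∀ a b : {v : HVert k n // HValid E v},
        (HBig E).Adj a b ↔ a ≠ b ∧ (hRel a.1 b.1 ∨ hRel b.1 a.1) := fun a b =>
      SimpleGraph.fromRel_adj (fun a b : {v : HVert k n // HValid E v} => hRel a.1 b.1) a b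
    rintro ⟨w, hw⟩
    cases w with
    | aF =>
        have ht : hT E ⟨HVert.aF, hw⟩ = 1 := rfl
        rw [ht]
        have he : ((HBig E).neighborSet ⟨HVert.aF, hw⟩ ∩ {v | inS c v.1}) = ∅ := by
          ext ⟨w', hw'⟩
          simp only [Set.mem_inter_iff, SimpleGraph.mem_neighborSet, Set.mem_setOf_eq,
            Set.mem_empty_iff_false, iff_false, not_and]
          intro hadj hS
          obtain ⟨-, h | h⟩ := (hadj_iff _ _).mp hadj <;> cases w' <;>
            first | exact h | exact hS
        rw [he, Set.ncard_empty]; omega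
    | bF =>
        have ht : hT E ⟨HVert.bF, hw⟩ = 1 := rfl
        rw [ht]
        have he : ((HBig E).neighborSet ⟨HVert.bF, hw⟩ ∩ {v | inS c v.1}) = ∅ := by
          ext ⟨w', hw'⟩
          simp only [Set.mem_inter_iff, SimpleGraph.mem_neighborSet, Set.mem_setOf_eq,
            Set.mem_empty_iff_false, iff_false, not_and]
          intro hadj hS
          obtain ⟨-, h | h⟩ := (hadj_iff _ _).mp hadj <;> cases w' <;>
            first | exact h | exact hS
        rw [he, Set.ncard_empty]; omega
    | selX i s =>
        have ht : hT E ⟨HVert.selX i s, hw⟩ = 2 := rfl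
        rw [ht]
        refine lt_of_le_of_lt (ncard_le_one_of_subset_singleton
          (x := ⟨fsel c (i, s), by unfold fsel; split <;> trivial⟩) ?_) one_lt_two
        rintro ⟨w', hw'⟩ ⟨hadj, hS⟩
        simp only [Set.mem_setOf_eq] at hS
        obtain ⟨-, h | h⟩ := (hadj_iff _ _).mp hadj
        · cases w' <;> try exact h.elim
          · obtain ⟨rfl, rfl⟩ := h
            simp only [inS] at hS
            have hf : fsel c (i, s) = HVert.selD i s := by
              unfold fsel; rw [if_neg (show ¬((s : ℕ) ≤ (c i : ℕ)) from by omega)]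
            rw [Set.mem_singleton_iff]
            exact Subtype.ext hf.symm
          · obtain ⟨rfl, rfl⟩ := h
            simp only [inS] at hS
            have hf : fsel c (i, s) = HVert.selL i s := by unfold fsel; rw [if_pos hS]
            rw [Set.mem_singleton_iff]
            exact Subtype.ext hf.symm
        · cases w' <;> first | exact h.elim | exact hS.elim
    | testX i j x y r =>
        have ht : hT E ⟨HVert.testX i j x y r, hw⟩ = 2 := rfl
        rw [ht]
        by_cases hch : x = c i ∧ y = c j
        · refine lt_of_le_of_lt (ncard_le_one_of_subset_singleton
            (x := ⟨HVert.testL i j x y r, ⟨hw.1, hw.2⟩⟩) ?_) one_lt_two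
          rintro ⟨w', hw'⟩ ⟨hadj, hS⟩
          simp only [Set.mem_setOf_eq] at hS
          obtain ⟨-, h | h⟩ := (hadj_iff _ _).mp hadj
          · cases w' <;> try exact h.elim
            · obtain ⟨rfl, rfl, rfl, rfl, rfl⟩ := h
              rfl
            · obtain ⟨rfl, rfl, rfl, rfl⟩ := h
              exact absurd hch hS
          · cases w' <;> first | exact h.elim | exact hS.elim
        · refine lt_of_le_of_lt (ncard_le_one_of_subset_singleton
            (x := ⟨HVert.testD i j x y, ⟨hw.1, hw.2⟩⟩) ?_) one_lt_two
          rintro ⟨w', hw'⟩ ⟨hadj, hS⟩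
          simp only [Set.mem_setOf_eq] at hS
          obtain ⟨-, h | h⟩ := (hadj_iff _ _).mp hadj
          · cases w' <;> try exact h.elim
            · obtain ⟨rfl, rfl, rfl, rfl, rfl⟩ := h
              exact absurd hS hch
            · obtain ⟨rfl, rfl, rfl, rfl⟩ := h
              rfl
          · cases w' <;> first | exact h.elim | exact hS.elim
    | port i j plus side =>
        have ht : hT E ⟨HVert.port i j plus side, hw⟩ = n + 1 := rfl
        rw [ht, Nat.lt_succ_iff]
        set a : ℕ := (c (if side then j else i) : ℕ) with ha
        have han : a < n := (c _).isLt
        have hittrue : ∀ A B : ℕ, (if (true : Bool) = true then A else B) = A := fun _ _ => rfl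
        have hitfalse : ∀ A B : ℕ, (if (false : Bool) = true then A else B) = B := fun _ _ => rfl
        have hifc : (if side then ((c j : ℕ)) else ((c i : ℕ))) = a := by
          cases side <;> simp [ha]
        have hshape : ∀ u ∈ (HBig E).neighborSet ⟨HVert.port i j plus side, hw⟩
            ∩ {v | inS c v.1},
            (∃ s' : Fin n, u.1 = HVert.selL (if side then j else i) s'
              ∧ plus = true ∧ (s' : ℕ) ≤ a) ∨
            (∃ s' : Fin n, u.1 = HVert.selD (if side then j else i) s'
              ∧ plus = false ∧ a < (s' : ℕ)) ∨
            (∃ r : Fin n, u.1 = HVert.testL i j (c i) (c j) r ∧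
              ((plus = true ∧ (r : ℕ) + a + 2 ≤ n) ∨
               (plus = false ∧ n < (r : ℕ) + a + 2))) := by
          rintro ⟨w', hw'⟩ ⟨hadj, hS⟩
          simp only [Set.mem_setOf_eq] at hS
          obtain ⟨-, h | h⟩ := (hadj_iff _ _).mp hadj
          · cases w' <;> try exact h.elim
            · obtain ⟨rfl, hplus⟩ := h
              exact Or.inr (Or.inl ⟨_, rfl, hplus, by simp only [inS] at hS; exact hS⟩)
            · obtain ⟨rfl, hplus⟩ := h
              exact Or.inl ⟨_, rfl, hplus, hS⟩
            next i' j' x y r =>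
              obtain ⟨rfl, rfl, hcond⟩ := h
              obtain ⟨hx, hy⟩ := hS
              subst hx; subst hy
              rw [hifc] at hcond
              exact Or.inr (Or.inr ⟨r, rfl, hcond⟩)
          · cases w' <;> first | exact h.elim | exact hS.elim
        apply ncard_le_of_injOn_lt (g := fun u => gport a plus u.1)
        · intro u hu v hv hg
          replace hg : gport a plus u.1 = gport a plus v.1 := hg
          apply Subtype.ext
          rcases hshape u hu with ⟨s1, e1, hp1, hb1⟩ | ⟨s1, e1, hp1, hb1⟩ | ⟨r1, e1, hb1⟩ <;>
            rcases hshape v hv with ⟨s2, e2, hp2, hb2⟩ | ⟨s2, e2, hp2, hb2⟩ | ⟨r2, e2, hb2⟩ <;>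
            rw [e1, e2] at hg ⊢
          · subst hp1; simp only [gport] at hg
            exact congrArg _ (Fin.ext hg)
          · rw [hp1] at hp2; exact absurd hp2 (by decide)
          · rcases hb2 with ⟨hp2, hb2⟩ | ⟨hp2, -⟩
            · subst hp2; simp only [gport] at hg
              exact absurd hg (by omega)
            · rw [hp1] at hp2; exact absurd hp2 (by decide)
          · rw [hp1] at hp2; exact absurd hp2 (by decide)
          · subst hp1; simp only [gport] at hg
            exact congrArg _ (Fin.ext hg)
          · rcases hb2 with ⟨hp2, -⟩ | ⟨hp2, hb2⟩
            · rw [hp1] at hp2; exact absurd hp2 (by decide)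
            · subst hp2; simp only [gport] at hg
              have := r2.isLt
              exact absurd hg (by omega)
          · rcases hb1 with ⟨hp1, hb1⟩ | ⟨hp1, -⟩
            · subst hp1; simp only [gport] at hg
              exact absurd hg.symm (by omega)
            · rw [hp2] at hp1; exact absurd hp1 (by decide)
          · rcases hb1 with ⟨hp1, -⟩ | ⟨hp1, hb1⟩
            · rw [hp2] at hp1; exact absurd hp1 (by decide)
            · subst hp1; simp only [gport] at hg
              have := r1.isLt
              exact absurd hg.symm (by omega)
          · rcases hb1 with ⟨hp1, hb1⟩ | ⟨hp1, hb1⟩ <;>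
              rcases hb2 with ⟨hp2, hb2⟩ | ⟨hp2, hb2⟩
            · subst hp1; simp only [gport] at hg
              exact congrArg _ (Fin.ext (by omega))
            · rw [hp1] at hp2; exact absurd hp2 (by decide)
            · rw [hp2] at hp1; exact absurd hp1 (by decide)
            · subst hp1; simp only [gport] at hg
              have := r1.isLt
              have := r2.isLt
              exact congrArg _ (Fin.ext (by omega))
        · intro u hu
          show gport a plus u.1 < n
          rcases hshape u hu with ⟨s1, e1, hp1, hb1⟩ | ⟨s1, e1, hp1, hb1⟩ | ⟨r1, e1, hb1⟩
          · subst hp1; rw [e1]; simp only [gport]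
            exact s1.isLt
          · subst hp1; rw [e1]; simp only [gport]
            exact s1.isLt
          · rcases hb1 with ⟨hp1, hb1⟩ | ⟨hp1, hb1⟩ <;> subst hp1 <;> rw [e1] <;>
              simp only [gport]
            · omega
            · have := r1.isLt
              omega
    | apex i j =>
        have ht : hT E ⟨HVert.apex i j, hw⟩ = n + 1 := rfl
        rw [ht, Nat.lt_succ_iff]
        have hshape : ∀ u ∈ (HBig E).neighborSet ⟨HVert.apex i j, hw⟩ ∩ {v | inS c v.1},
            ∃ r : Fin n, u.1 = HVert.testL i j (c i) (c j) r := by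
          rintro ⟨w', hw'⟩ ⟨hadj, hS⟩
          simp only [Set.mem_setOf_eq] at hS
          obtain ⟨-, h | h⟩ := (hadj_iff _ _).mp hadj
          · cases w' <;> try exact h.elim
            next i' j' x y r =>
              obtain ⟨rfl, rfl⟩ := h
              obtain ⟨hx, hy⟩ := hS
              subst hx; subst hy
              exact ⟨r, rfl⟩
          · cases w' <;> first | exact h.elim | exact hS.elim
        apply ncard_le_of_injOn_lt (g := fun u => gapex u.1)
        · intro u hu v hv hg
          replace hg : gapex u.1 = gapex v.1 := hg
          apply Subtype.ext
          obtain ⟨r1, e1⟩ := hshape u hu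
          obtain ⟨r2, e2⟩ := hshape v hv
          rw [e1, e2] at hg ⊢
          simp only [gapex] at hg
          exact congrArg _ (Fin.ext hg)
        · intro u hu
          show gapex u.1 < n
          obtain ⟨r1, e1⟩ := hshape u hu
          rw [e1]
          exact r1.isLt
    | selD i s =>
        exact lt_of_le_of_lt (Set.ncard_le_ncard Set.inter_subset_left (Set.toFinite _))
          (Nat.lt_succ_self _)
    | selL i s =>
        exact lt_of_le_of_lt (Set.ncard_le_ncard Set.inter_subset_left (Set.toFinite _))
          (Nat.lt_succ_self _)
    | testL i j x y r =>
        exact lt_of_le_of_lt (Set.ncard_le_ncard Set.inter_subset_left (Set.toFinite _))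
          (Nat.lt_succ_self _)
    | testD i j x y =>
        exact lt_of_le_of_lt (Set.ncard_le_ncard Set.inter_subset_left (Set.toFinite _))
          (Nat.lt_succ_self _)
  · -- Cardinality
    set A : Set (HVert k n) := fsel c '' Set.univ with hAdef
    set Cs : Set (HVert k n) := ftl c '' ({p : Fin k × Fin k | p.1 < p.2} ×ˢ Set.univ) with hCdef
    set Eset : Set ((Fin k × Fin n) × (Fin k × Fin n)) :=
      {q | q.1.1 < q.2.1 ∧ E q.1.1 q.1.2 q.2.1 q.2.2} with hEdef
    set Chosen : Set ((Fin k × Fin n) × (Fin k × Fin n)) :=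
      (fun p : Fin k × Fin k => ((p.1, c p.1), (p.2, c p.2))) '' {p : Fin k × Fin k | p.1 < p.2}
      with hChdef
    set Ds : Set (HVert k n) := ftd '' (Eset \ Chosen) with hDdef
    have hfselinj : Function.Injective (fsel c) := by
      intro p q h
      unfold fsel at h
      split_ifs at h <;>
        simp only [HVert.selL.injEq, HVert.selD.injEq, reduceCtorEq] at h <;>
        exact Prod.ext h.1 h.2
    have hftlinj : Function.Injective (ftl (k := k) (n := n) c) := by
      intro p q h
      simp only [ftl, HVert.testL.injEq] at h
      exact Prod.ext (Prod.ext h.1 h.2.1) h.2.2.2.2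
    have hftdinj : Function.Injective (ftd (k := k) (n := n)) := by
      intro p q h
      simp only [ftd, HVert.testD.injEq] at h
      exact Prod.ext (Prod.ext h.1 h.2.2.1) (Prod.ext h.2.1 h.2.2.2)
    have hChsub : Chosen ⊆ Eset := by
      rintro q ⟨p, hp, rfl⟩
      exact ⟨hp, hc _ _ (ne_of_lt hp)⟩
    -- the image of the harmless set under the inclusion
    have key : Subtype.val '' {v : {v : HVert k n // HValid E v} | inS c v.1} = A ∪ Cs ∪ Ds := by
      ext w
      constructor
      · rintro ⟨⟨w, hv⟩, hS, rfl⟩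
        simp only [Set.mem_setOf_eq] at hS
        cases w with
        | selL i s =>
            simp only [inS] at hS
            exact Or.inl (Or.inl ⟨(i, s), trivial, by unfold fsel; rw [if_pos hS]⟩)
        | selD i s =>
            simp only [inS] at hS
            exact Or.inl (Or.inl ⟨(i, s), trivial, by
              unfold fsel; rw [if_neg (show ¬((s : ℕ) ≤ (c i : ℕ)) from by omega)]⟩)
        | testL i j x y r =>
            obtain ⟨hx, hy⟩ := hS
            exact Or.inl (Or.inr ⟨((i, j), r), ⟨hv.1, trivial⟩, by simp [ftl, hx, hy]⟩)
        | testD i j x y =>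
            refine Or.inr ⟨((i, x), (j, y)), ⟨⟨hv.1, hv.2⟩, ?_⟩, rfl⟩
            rintro ⟨p, hp, heq⟩
            simp only [Prod.ext_iff] at heq
            obtain ⟨⟨h1, h2⟩, h3, h4⟩ := heq
            exact hS ⟨by rw [← h1, h2], by rw [← h3, h4]⟩
        | aF => exact absurd hS (by simp [inS])
        | bF => exact absurd hS (by simp [inS])
        | selX i s => exact absurd hS (by simp [inS])
        | port i j p q => exact absurd hS (by simp [inS])
        | testX i j x y r => exact absurd hS (by simp [inS])
        | apex i j => exact absurd hS (by simp [inS])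
      · rintro ((⟨p, -, rfl⟩ | ⟨q, hq, rfl⟩) | ⟨q, hq, rfl⟩)
        · by_cases h : (p.2 : ℕ) ≤ (c p.1 : ℕ)
          · exact ⟨⟨fsel c p, by unfold fsel; rw [if_pos h]; trivial⟩,
              by simp only [Set.mem_setOf_eq]; unfold fsel; rw [if_pos h]; exact h, rfl⟩
          · refine ⟨⟨fsel c p, by unfold fsel; rw [if_neg h]; trivial⟩, ?_, rfl⟩
            simp only [Set.mem_setOf_eq]; unfold fsel; rw [if_neg h]
            show (c p.1 : ℕ) < (p.2 : ℕ); omega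
        · obtain ⟨hlt, -⟩ := hq
          refine ⟨⟨ftl c q, ⟨hlt, hc _ _ (ne_of_lt hlt)⟩⟩, ?_, rfl⟩
          show inS c (ftl c q)
          unfold ftl inS
          exact ⟨rfl, rfl⟩
        · refine ⟨⟨ftd q, ⟨hq.1.1, hq.1.2⟩⟩, ?_, rfl⟩
          rintro ⟨hx, hy⟩
          exact hq.2 ⟨(q.1.1, q.2.1), hq.1.1, by show ((q.1.1, c q.1.1), (q.2.1, c q.2.1)) = q; rw [← hx, ← hy]⟩
    have hdisjAC : Disjoint A Cs := by
      rw [Set.disjoint_left]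
      rintro w ⟨p, -, rfl⟩ ⟨q, -, hq⟩
      by_cases h : (p.2 : ℕ) ≤ (c p.1 : ℕ) <;> simp [fsel, h, ftl] at hq
    have hdisjAD : Disjoint A Ds := by
      rw [Set.disjoint_left]
      rintro w ⟨p, -, rfl⟩ ⟨q, -, hq⟩
      by_cases h : (p.2 : ℕ) ≤ (c p.1 : ℕ) <;> simp [fsel, h, ftd] at hq
    have hdisjCD : Disjoint Cs Ds := by
      rw [Set.disjoint_left]
      rintro w ⟨p, -, rfl⟩ ⟨q, -, hq⟩
      simp [ftl, ftd] at hq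
    have hA : A.ncard = k * n := by
      rw [hAdef, Set.ncard_image_of_injective _ hfselinj, Set.ncard_univ,
        Nat.card_eq_fintype_card]
      simp
    have hCs : Cs.ncard = Nat.choose k 2 * n := by
      rw [hCdef, Set.ncard_image_of_injective _ hftlinj, ← Nat.card_coe_set_eq]
      rw [Nat.card_congr (Equiv.Set.prod _ _), Nat.card_prod]
      rw [Nat.card_coe_set_eq, Nat.card_coe_set_eq, cardLtPairs, Set.ncard_univ,
        Nat.card_eq_fintype_card, Fintype.card_fin]
    have hCh : Chosen.ncard = Nat.choose k 2 := by
      rw [hChdef, Set.ncard_image_of_injective _ ?_, cardLtPairs]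
      intro p q h
      simp only [Prod.ext_iff] at h
      exact Prod.ext h.1.1 h.2.1
    have hEm : Eset.ncard = mTotal E := rfl
    have hmge : Nat.choose k 2 ≤ mTotal E := by
      rw [← hCh, ← hEm]; exact Set.ncard_le_ncard hChsub (Set.toFinite _)
    have hDs : Ds.ncard = mTotal E - Nat.choose k 2 := by
      rw [hDdef, Set.ncard_image_of_injective _ hftdinj,
        Set.ncard_diff hChsub (Set.toFinite _), hEm, hCh]
    have hval : Function.Injective (Subtype.val : {v : HVert k n // HValid E v} → HVert k n) :=
      Subtype.val_injective
    have hcount : ({v : {v : HVert k n // HValid E v} | inS c v.1}).ncard = (A ∪ Cs ∪ Ds).ncard := by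
      rw [← key, Set.ncard_image_of_injective _ hval]
    rw [hcount, Set.ncard_union_eq (by
        rw [Set.disjoint_union_left]; exact ⟨hdisjAD, hdisjCD⟩) (Set.toFinite _) (Set.toFinite _),
      Set.ncard_union_eq hdisjAC (Set.toFinite _) (Set.toFinite _), hA, hCs, hDs]
    have hsplit : Nat.choose k 2 * n = Nat.choose k 2 * (n - 1) + Nat.choose k 2 := by
      have : n - 1 + 1 = n := by omega
      rw [← this, Nat.mul_add, Nat.mul_one, this]
    omega
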